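/- Let f : ℝⁿ → [0,+∞) be an integrable log-concave function with ‖f‖_∞ = f(0) = 1 and 0 < ∫_{ℝⁿ} f(x) dx. Then for every t > 1, the set H_t(f) = ⋃_{λ∈(0,1)} (log(t/λ))^{−1}·K_λ(f) is bounded. Moreover, H₁(f) = ⋃_{λ∈(0,1)} (log(1/λ))^{−1}·K_λ(f) is a convex set, and if H₁(f) is unbounded then its Lebesgue measure is infinite. -/

import Mathlib

open MeasureTheory Pointwise

open Bornology Metric ENNReal

noncomputable section

lemma convex_unbounded_volume_eq_top {n : ℕ} {s : Set (Fin n → ℝ)}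
    (hs : Convex ℝ s) (h0 : 0 < volume s) (hub : ¬ IsBounded s) :
    volume s = ⊤ := by
  -- interior is nonempty
  obtain ⟨z, hz⟩ : (interior s).Nonempty := by
    by_contra h
    rw [Set.not_nonempty_iff_eq_empty] at h
    have hfr : volume (frontier s) = 0 := hs.addHaar_frontier volume
    have hsub : s ⊆ frontier s := by
      rw [frontier, h, Set.diff_empty]; exact subset_closure
    exact absurd (measure_mono_null hsub hfr) h0.ne'
  obtain ⟨r, hr, hball⟩ := Metric.isOpen_iff.mp isOpen_interior z hz
  have hballs : Metric.ball z r ⊆ s := hball.trans interior_subset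
  set v : ℝ≥0∞ := volume (Metric.ball (0 : Fin n → ℝ) (r/2)) with hv
  have hvpos : 0 < v := measure_ball_pos _ _ (by positivity)
  have hvfin : v < ⊤ := measure_ball_lt_top
  have key : ∀ k : ℕ, (k + 1 : ℝ≥0∞) * v ≤ volume s := by
    intro k
    -- pick a far away point of s
    have hub' : ∀ C : ℝ, ∃ x ∈ s, C < ‖x‖ := by
      by_contra h
      push_neg at h
      obtain ⟨C, hC⟩ := h
      exact hub (isBounded_iff_forall_norm_le.mpr ⟨C, hC⟩)
    obtain ⟨p, hp, hpnorm⟩ := hub' (2 * r * (k + 1) + ‖z‖)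
    set D : ℝ := ‖p - z‖ with hD
    have hDge : 2 * r * (k + 1) ≤ D := by
      have := norm_sub_norm_le p z
      linarith
    have hDpos : 0 < D := by
      have : (0:ℝ) < 2 * r * (k+1) := by positivity
      linarith
    -- centers
    set c : ℕ → (Fin n → ℝ) := fun i => z + ((i * r) / D) • (p - z) with hc
    have hθ : ∀ i : ℕ, i ≤ k → (i * r) / D ∈ Set.Icc (0:ℝ) (1/2) := by
      intro i hi
      constructor
      · positivity
      · rw [div_le_iff₀ hDpos]
        have hik : (i:ℝ) ≤ k := by exact_mod_cast hi
        nlinarith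
    -- each small ball is in s
    have hball_sub : ∀ i : ℕ, i ≤ k → Metric.ball (c i) (r/2) ⊆ s := by
      intro i hi w hw
      set θ : ℝ := (i * r) / D with hθdef
      obtain ⟨hθ0, hθ2⟩ := hθ i hi
      have h1θ : (1/2 : ℝ) ≤ 1 - θ := by linarith
      have h1θ0 : (1 - θ : ℝ) ≠ 0 := by linarith
      set q : (Fin n → ℝ) := z + (1 - θ)⁻¹ • (w - c i) with hq
      have hqball : q ∈ Metric.ball z r := by
        rw [Metric.mem_ball, dist_eq_norm]
        have : q - z = (1 - θ)⁻¹ • (w - c i) := by rw [hq]; abel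
        rw [this, norm_smul]
        have hwc : ‖w - c i‖ < r / 2 := by
          rw [← dist_eq_norm]; exact hw
        have habs : |(1 - θ)⁻¹| ≤ 2 := by
          rw [abs_of_pos (by positivity)]
          rw [inv_le_comm₀ (by linarith) (by norm_num)]
          linarith
        have h2 : ‖w - c i‖ ≥ 0 := norm_nonneg _
        calc |(1-θ)⁻¹| * ‖w - c i‖ ≤ 2 * ‖w - c i‖ := by nlinarith
          _ < r := by linarith
      have hmem : (1 - θ) • q + θ • p ∈ s :=
        hs (hballs hqball) hp (by linarith) hθ0 (by ring)
      have heq : (1 - θ) • q + θ • p = w := by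
        rw [hq, hc]
        simp only [smul_add, smul_inv_smul₀ h1θ0]
        module
      rwa [heq] at hmem
    -- the balls are disjoint
    have hdisj : ((Finset.range (k+1) : Finset ℕ) : Set ℕ).PairwiseDisjoint
        (fun i => Metric.ball (c i) (r/2)) := by
      intro i hi j hj hij
      refine Metric.ball_disjoint_ball ?_
      rw [dist_eq_norm]
      have : c i - c j = (((i:ℝ) * r - j * r) / D) • (p - z) := by
        rw [hc]
        simp only
        module
      rw [this, norm_smul, Real.norm_eq_abs, ← hD, abs_div, abs_of_pos hDpos, div_mul_cancel₀ _ hDpos.ne']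
      have h1 : (1:ℝ) ≤ |(i:ℝ) - j| := by
        have hne : (i:ℤ) - j ≠ 0 := sub_ne_zero.mpr (by exact_mod_cast hij)
        have h2 : (1:ℤ) ≤ |(i:ℤ) - j| := Int.one_le_abs hne
        exact_mod_cast h2
      have : |(i:ℝ) * r - j * r| = |(i:ℝ) - j| * r := by
        rw [← sub_mul, abs_mul, abs_of_pos hr]
      rw [this]
      nlinarith
    have hsum : volume (⋃ i ∈ Finset.range (k+1), Metric.ball (c i) (r/2))
        = ∑ i ∈ Finset.range (k+1), volume (Metric.ball (c i) (r/2)) :=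
      measure_biUnion_finset hdisj (fun i _ => measurableSet_ball)
    have hsub : (⋃ i ∈ Finset.range (k+1), Metric.ball (c i) (r/2)) ⊆ s := by
      refine Set.iUnion₂_subset fun i hi => hball_sub i ?_
      exact Nat.lt_succ_iff.mp (Finset.mem_range.mp hi)
    calc (k + 1 : ℝ≥0∞) * v = ∑ _i ∈ Finset.range (k+1), v := by
          rw [Finset.sum_const, Finset.card_range, nsmul_eq_mul]; push_cast; ring
      _ = ∑ i ∈ Finset.range (k+1), volume (Metric.ball (c i) (r/2)) := by
          refine Finset.sum_congr rfl fun i _ => ?_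
          rw [hv]
          exact (Measure.addHaar_ball_center volume (c i) (r/2)).symm
      _ = volume (⋃ i ∈ Finset.range (k+1), Metric.ball (c i) (r/2)) := hsum.symm
      _ ≤ volume s := measure_mono hsub
  by_contra hne
  obtain ⟨k, hk⟩ := ENNReal.exists_nat_gt (ENNReal.div_lt_top hne hvpos.ne').ne
  have h1 : volume s < k * v := by
    rwa [ENNReal.div_lt_iff (Or.inl hvpos.ne') (Or.inl hvfin.ne)] at hk
  have h2 : (k : ℝ≥0∞) * v ≤ (k + 1) * v :=
    mul_le_mul_of_nonneg_right (by simp) zero_le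
  exact absurd ((h1.trans_le h2).trans_le (key k)) (lt_irrefl _)

/-- `H_t(f) = ⋃_{λ∈(0,1)} (log(t/λ))⁻¹·K_λ(f)` where `K_λ(f) = {x : f x ≥ λ}`. -/
def Hset {n : ℕ} (f : (Fin n → ℝ) → ℝ) (t : ℝ) : Set (Fin n → ℝ) :=
  ⋃ l ∈ Set.Ioo (0 : ℝ) 1, (Real.log (t / l))⁻¹ • {x : Fin n → ℝ | l ≤ f x}

/-- Lemma 3.4 of the paper: for an integrable log-concave `f` with `‖f‖_∞ = f 0 = 1`,
`H_t(f)` is bounded for every `t > 1`; moreover `H₁(f)` is convex, and if `H₁(f)` is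
unbounded then `|H₁(f)| = +∞`. -/
theorem stmt_13 (n : ℕ)
    (f : (Fin n → ℝ) → ℝ) (hf_nonneg : ∀ x, 0 ≤ f x)
    (hf_int : Integrable f) (hf_pos : 0 < ∫ x, f x)
    (hf_lc : ∀ x y : Fin n → ℝ, ∀ θ : ℝ, 0 ≤ θ → θ ≤ 1 →
      f x ^ (1 - θ) * f y ^ θ ≤ f ((1 - θ) • x + θ • y))
    (hf_le : ∀ x, f x ≤ 1) (hf0 : f 0 = 1) :
    (∀ t : ℝ, 1 < t → Bornology.IsBounded (Hset f t)) ∧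
    Convex ℝ (Hset f 1) ∧
    (¬ Bornology.IsBounded (Hset f 1) → volume (Hset f 1) = ⊤) := by
  -- superlevel sets are convex
  have hKconv : ∀ l : ℝ, 0 < l → Convex ℝ {x : Fin n → ℝ | l ≤ f x} := by
    intro l hl x hx y hy a b ha hb hab
    have hx' : l ≤ f x := hx
    have hy' : l ≤ f y := hy
    have hlc := hf_lc x y b hb (by linarith)
    have h1 : l ^ (1 - b) * l ^ b ≤ f x ^ (1 - b) * f y ^ b :=
      mul_le_mul (Real.rpow_le_rpow hl.le hx' (by linarith))
        (Real.rpow_le_rpow hl.le hy' hb) (Real.rpow_nonneg hl.le _)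
        (Real.rpow_nonneg (hf_nonneg x) _)
    have h2 : l ^ (1 - b) * l ^ b = l := by
      rw [← Real.rpow_add hl]; norm_num
    have hab' : a = 1 - b := by linarith
    show l ≤ f (a • x + b • y)
    rw [hab']
    calc l = l ^ (1 - b) * l ^ b := h2.symm
      _ ≤ f x ^ (1 - b) * f y ^ b := h1
      _ ≤ f ((1 - b) • x + b • y) := hlc
  -- monotonicity of the pieces of H₁
  have hmono : ∀ l l' : ℝ, l ∈ Set.Ioo (0:ℝ) 1 → l' ∈ Set.Ioo (0:ℝ) 1 → l ≤ l' →
      (Real.log (1/l))⁻¹ • {x : Fin n → ℝ | l ≤ f x} ⊆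
        (Real.log (1/l'))⁻¹ • {x : Fin n → ℝ | l' ≤ f x} := by
    intro l l' hl hl' hll' y hy
    have hs : 0 < Real.log (1/l) := Real.log_pos (by rw [one_lt_div hl.1]; exact hl.2)
    have hs' : 0 < Real.log (1/l') := Real.log_pos (by rw [one_lt_div hl'.1]; exact hl'.2)
    set s : ℝ := Real.log (1/l) with hsdef
    set s' : ℝ := Real.log (1/l') with hs'def
    have hsl : s = -Real.log l := by rw [hsdef, one_div, Real.log_inv]
    have hsl' : s' = -Real.log l' := by rw [hs'def, one_div, Real.log_inv]
    have hs's : s' ≤ s := by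
      have := Real.log_le_log hl.1 hll'
      rw [hsl, hsl']; linarith
    rw [Set.mem_smul_set_iff_inv_smul_mem₀ (inv_ne_zero hs.ne'), inv_inv] at hy
    rw [Set.mem_smul_set_iff_inv_smul_mem₀ (inv_ne_zero hs'.ne'), inv_inv]
    have hy' : l ≤ f (s • y) := hy
    set θ : ℝ := s'/s with hθdef
    have hθ0 : 0 ≤ θ := by positivity
    have hθ1 : θ ≤ 1 := by rw [hθdef, div_le_one hs]; exact hs's
    have hlc := hf_lc 0 (s • y) θ hθ0 hθ1
    have heq : (1-θ) • (0 : Fin n → ℝ) + θ • (s • y) = s' • y := by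
      rw [smul_zero, zero_add, smul_smul]
      congr 1
      rw [hθdef]; field_simp
    have hlθ : l ^ θ = l' := by
      rw [Real.rpow_def_of_pos hl.1]
      have h1 : Real.log l = -s := by rw [hsl]; ring
      have h2 : Real.log l' = -s' := by rw [hs'def, one_div, Real.log_inv]; ring
      have : Real.log l * θ = Real.log l' := by
        rw [h1, h2, hθdef]
        field_simp
      rw [this, Real.exp_log hl'.1]
    show l' ≤ f (s' • y)
    calc l' = l ^ θ := hlθ.symm
      _ ≤ f (s • y) ^ θ := Real.rpow_le_rpow hl.1.le hy' hθ0
      _ = f 0 ^ (1-θ) * f (s • y) ^ θ := by rw [hf0, Real.one_rpow, one_mul]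
      _ ≤ f ((1-θ) • (0 : Fin n → ℝ) + θ • (s • y)) := hlc
      _ = f (s' • y) := by rw [heq]
  -- convexity of H₁
  have hconv1 : Convex ℝ (Hset f 1) := by
    intro x hx y hy a b ha hb hab
    simp only [Hset, Set.mem_iUnion, exists_prop] at hx hy ⊢
    obtain ⟨l₁, hl₁, hx⟩ := hx
    obtain ⟨l₂, hl₂, hy⟩ := hy
    refine ⟨max l₁ l₂, ⟨lt_max_iff.mpr (Or.inl hl₁.1), max_lt hl₁.2 hl₂.2⟩, ?_⟩
    have hmem : max l₁ l₂ ∈ Set.Ioo (0:ℝ) 1 :=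
      ⟨lt_max_iff.mpr (Or.inl hl₁.1), max_lt hl₁.2 hl₂.2⟩
    have hc : Convex ℝ ((Real.log (1/(max l₁ l₂)))⁻¹ • {x : Fin n → ℝ | max l₁ l₂ ≤ f x}) :=
      (hKconv _ hmem.1).smul _
    exact hc (hmono _ _ hl₁ hmem (le_max_left _ _) hx)
      (hmono _ _ hl₂ hmem (le_max_right _ _) hy) ha hb hab
  -- find a level with positive measure
  obtain ⟨l₀, hl₀, h0K⟩ : ∃ l₀ ∈ Set.Ioo (0:ℝ) 1, 0 < volume {x : Fin n → ℝ | l₀ ≤ f x} := by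
    by_contra h
    push_neg at h
    have hnull : volume {x : Fin n → ℝ | 0 < f x} = 0 := by
      have hsub : {x : Fin n → ℝ | 0 < f x} ⊆ ⋃ k : ℕ, {x : Fin n → ℝ | (1:ℝ)/(k+2) ≤ f x} := by
        intro x hx
        obtain ⟨k, hk⟩ := exists_nat_ge (1 / f x)
        refine Set.mem_iUnion.mpr ⟨k, ?_⟩
        show (1:ℝ)/(k+2) ≤ f x
        rw [div_le_iff₀ (by positivity)]
        have h2 : 1 / f x ≤ (k:ℝ) + 2 := by linarith
        rw [div_le_iff₀ hx] at h2
        linarith [mul_comm (f x) ((k:ℝ)+2)]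
      refine measure_mono_null hsub (measure_iUnion_null fun k => ?_)
      have hk1 : (1:ℝ)/(k+2) ∈ Set.Ioo (0:ℝ) 1 := by
        constructor
        · positivity
        · rw [div_lt_one (by positivity)]
          have : (0:ℝ) ≤ k := Nat.cast_nonneg k
          linarith
      exact le_antisymm (h _ hk1) zero_le
    have hzero : ∫ x, f x = 0 := by
      have hae : f =ᵐ[volume] 0 := by
        rw [Filter.EventuallyEq, ae_iff]
        refine measure_mono_null ?_ hnull
        intro x hx
        simp only [Set.mem_setOf_eq, Pi.zero_apply] at hx ⊢
        exact lt_of_le_of_ne (hf_nonneg x) (Ne.symm hx)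
      rw [integral_congr_ae hae]
      simp
    exact absurd hzero hf_pos.ne'
  -- this level set has finite measure, hence is bounded
  have hKfin : volume {x : Fin n → ℝ | l₀ ≤ f x} < ⊤ := hf_int.measure_ge_lt_top hl₀.1
  have hKbdd : IsBounded {x : Fin n → ℝ | l₀ ≤ f x} := by
    by_contra h
    exact absurd (convex_unbounded_volume_eq_top (hKconv _ hl₀.1) h0K h) hKfin.ne
  obtain ⟨R, hR⟩ := hKbdd.subset_closedBall 0
  have hR0 : 0 ≤ R := by
    have h0 : (0 : Fin n → ℝ) ∈ {x : Fin n → ℝ | l₀ ≤ f x} := by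
      show l₀ ≤ f 0
      rw [hf0]; exact hl₀.2.le
    simpa using hR h0
  set c₀ : ℝ := -Real.log l₀ with hc₀def
  have hc₀ : 0 < c₀ := by
    have := Real.log_neg hl₀.1 hl₀.2
    rw [hc₀def]; linarith
  -- the norm bound on level sets
  have hbound : ∀ l ∈ Set.Ioo (0:ℝ) 1, ∀ x : Fin n → ℝ, l ≤ f x →
      ‖x‖ ≤ R * (1 + (-Real.log l) / c₀) := by
    intro l hl x hx
    set u : ℝ := -Real.log l with hudef
    have hu : 0 < u := by
      have := Real.log_neg hl.1 hl.2
      rw [hudef]; linarith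
    by_cases hcase : l₀ ≤ l
    · have hxK : x ∈ {x : Fin n → ℝ | l₀ ≤ f x} := le_trans hcase hx
      have hxR : ‖x‖ ≤ R := by simpa [dist_eq_norm] using hR hxK
      have : 0 ≤ R * (u / c₀) := by positivity
      nlinarith
    · push_neg at hcase
      set θ : ℝ := c₀ / u with hθdef
      have hc₀u : c₀ < u := by
        have := Real.log_lt_log hl.1 hcase
        rw [hc₀def, hudef]; linarith
      have hθ0 : 0 ≤ θ := by positivity
      have hθ1 : θ ≤ 1 := by rw [hθdef, div_le_one hu]; exact hc₀u.le
      have hlc := hf_lc 0 x θ hθ0 hθ1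
      have hlθ : l ^ θ = l₀ := by
        rw [Real.rpow_def_of_pos hl.1]
        have hlne : Real.log l ≠ 0 := by
          intro h
          rw [hudef, h] at hu
          simp at hu
        have : Real.log l * θ = Real.log l₀ := by
          rw [hθdef, hc₀def, hudef]
          field_simp
        rw [this, Real.exp_log hl₀.1]
      have hmem : θ • x ∈ {x : Fin n → ℝ | l₀ ≤ f x} := by
        show l₀ ≤ f (θ • x)
        calc l₀ = l ^ θ := hlθ.symm
          _ ≤ f x ^ θ := Real.rpow_le_rpow hl.1.le hx hθ0
          _ = f 0 ^ (1-θ) * f x ^ θ := by rw [hf0, Real.one_rpow, one_mul]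
          _ ≤ f ((1-θ) • (0 : Fin n → ℝ) + θ • x) := hlc
          _ = f (θ • x) := by rw [smul_zero, zero_add]
      have hnorm : θ * ‖x‖ ≤ R := by
        have := hR hmem
        simp only [Metric.mem_closedBall, dist_zero_right] at this
        rwa [norm_smul, Real.norm_eq_abs, abs_of_nonneg hθ0] at this
      have hx' : ‖x‖ ≤ R * (u / c₀) := by
        have h1 : ‖x‖ = (u / c₀) * (θ * ‖x‖) := by
          rw [hθdef]; field_simp
        rw [h1, mul_comm R (u / c₀)]
        exact mul_le_mul_of_nonneg_left hnorm (by positivity)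
      have hval : R * (1 + u / c₀) = R + R * (u / c₀) := by ring
      rw [hval]
      linarith
  refine ⟨?_, hconv1, ?_⟩
  · -- boundedness of H_t for t > 1
    intro t ht
    have hT : 0 < Real.log t := Real.log_pos ht
    refine (Metric.isBounded_closedBall (x := (0 : Fin n → ℝ))
      (r := R / Real.log t + R / c₀)).subset ?_
    intro y hy
    simp only [Hset, Set.mem_iUnion, exists_prop] at hy
    obtain ⟨l, hl, hy⟩ := hy
    have hu : 0 < -Real.log l := by
      have := Real.log_neg hl.1 hl.2
      linarith
    have hlog : Real.log (t/l) = Real.log t + (-Real.log l) := by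
      rw [Real.log_div (by linarith : t ≠ 0) hl.1.ne']; ring
    have hpos : 0 < Real.log (t/l) := by rw [hlog]; linarith
    rw [Set.mem_smul_set] at hy
    obtain ⟨x, hx, rfl⟩ := hy
    have hxb : ‖x‖ ≤ R * (1 + (-Real.log l) / c₀) := hbound l hl x hx
    rw [Metric.mem_closedBall, dist_zero_right, norm_smul, Real.norm_eq_abs,
      abs_of_pos (inv_pos.mpr hpos)]
    set T : ℝ := Real.log t
    set u : ℝ := -Real.log l
    have hcalc : (Real.log (t/l))⁻¹ * ‖x‖ ≤ (T + u)⁻¹ * (R * (1 + u / c₀)) := by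
      rw [hlog]
      exact mul_le_mul_of_nonneg_left hxb (by positivity)
    refine hcalc.trans ?_
    rw [inv_mul_le_iff₀ (by linarith)]
    have hexp : (T + u) * (R / T + R / c₀) = R + R * T / c₀ + (R * u / T + R * u / c₀) := by
      field_simp
    rw [hexp]
    have h1 : R * (1 + u / c₀) = R + R * u / c₀ := by ring
    rw [h1]
    have h2 : 0 ≤ R * T / c₀ := by positivity
    have h3 : 0 ≤ R * u / T := by positivity
    linarith
  · -- if H₁ is unbounded, its volume is infinite
    intro hub
    have hpos : 0 < volume (Hset f 1) := by
      have hsub : (Real.log (1/l₀))⁻¹ • {x : Fin n → ℝ | l₀ ≤ f x} ⊆ Hset f 1 := by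
        intro y hy
        simp only [Hset, Set.mem_iUnion, exists_prop]
        exact ⟨l₀, hl₀, hy⟩
      refine lt_of_lt_of_le ?_ (measure_mono hsub)
      rw [Measure.addHaar_smul]
      have hlogpos : 0 < Real.log (1/l₀) := Real.log_pos (by rw [one_lt_div hl₀.1]; exact hl₀.2)
      refine ENNReal.mul_pos ?_ h0K.ne'
      rw [Ne, ENNReal.ofReal_eq_zero, not_le]
      positivity
    exact convex_unbounded_volume_eq_top hconv1 hpos hub
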